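/- arXiv:1109.1753 — 2 statements merged into one kernel-verified Lean document; each statement's English description precedes it below -/
import Mathlib

section
/- If the Nevanlinna class N on the unit disk were invariant under multiplication by the identity function z (i.e., z·N' ⊆ N' where N' = {f' : f ∈ N}), then N ⊆ N'. Consequently, since there exists f ∈ N with no antiderivative in N, the function z is not a multiplier of N'. -/
open MeasureTheory Set Filter Finset

noncomputable section

/-- The open unit disk in ℂ. -/
def UD : Set ℂ := Metric.ball 0 1

/-- Holomorphic on the unit disk. -/
def HolOn (f : ℂ → ℂ) : Prop := DifferentiableOn ℂ f UD

/-- Bounded holomorphic functions on the disk (H^∞). -/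
def MemHinf (f : ℂ → ℂ) : Prop := HolOn f ∧ ∃ M : ℝ, ∀ z ∈ UD, ‖f z‖ ≤ M

/-- The Nevanlinna class: quotients u/v with u, v ∈ H^∞ and v zero-free on the disk. -/
def MemNev (f : ℂ → ℂ) : Prop :=
  ∃ u v : ℂ → ℂ, MemHinf u ∧ MemHinf v ∧ (∀ z ∈ UD, v z ≠ 0) ∧ ∀ z ∈ UD, f z = u z / v z

/-- Carleson measure on the unit disk (via Carleson disks). -/
def IsCarleson (μ : Measure ℂ) : Prop :=
  ∃ C : ℝ, ∀ ζ : ℂ, ‖ζ‖ = 1 → ∀ h : ℝ, 0 < h →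
    μ (Metric.closedBall ζ h ∩ UD) ≤ ENNReal.ofReal (C * h)

/-- The measure |F(z)|² (1-|z|)^{2n-1} dA(z) on the unit disk. -/
def wtMeasure (F : ℂ → ℂ) (n : ℕ) : Measure ℂ :=
  (volume.restrict UD).withDensity fun z => ENNReal.ofReal (‖F z‖ ^ 2 * (1 - ‖z‖) ^ (2 * n - 1))

/-- BMOA via the Carleson-measure characterization: w holomorphic on the disk and
|w'(z)|²(1-|z|)dA(z) a Carleson measure. -/
def MemBMOA (w : ℂ → ℂ) : Prop := HolOn w ∧ IsCarleson (wtMeasure (deriv w) 1)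

/-- Outer function: zero-free on the disk and the circular means of log|v| tend to log|v(0)|. -/
def Outer (v : ℂ → ℂ) : Prop :=
  (∀ z ∈ UD, v z ≠ 0) ∧
  Filter.Tendsto
    (fun r : ℝ => (2 * Real.pi)⁻¹ *
      ∫ θ in (0:ℝ)..(2 * Real.pi), Real.log ‖v (↑r * Complex.exp (↑θ * Complex.I))‖)
    (nhdsWithin 1 (Set.Iio 1)) (nhds (Real.log ‖v 0‖))

/-- The Smirnov class: quotients u/v with u, v ∈ H^∞ and v outer. -/
def MemSmirnov (f : ℂ → ℂ) : Prop :=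
  ∃ u v : ℂ → ℂ, MemHinf u ∧ MemHinf v ∧ Outer v ∧ ∀ z ∈ UD, f z = u z / v z

/-- f belongs to the class X, viewed as functions on the unit disk: some member of X
agrees with f on the disk. -/
def MemOn (X : Set (ℂ → ℂ)) (f : ℂ → ℂ) : Prop := ∃ F ∈ X, ∀ z ∈ UD, F z = f z

lemma UD_open : IsOpen UD := Metric.isOpen_ball

lemma memNev_diffAt {f : ℂ → ℂ} (hf : MemNev f) : ∀ z ∈ UD, DifferentiableAt ℂ f z := by
  obtain ⟨u, v, ⟨hu, _⟩, ⟨hv, _⟩, hvne, heq⟩ := hf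
  intro z hz
  have hdiv : DifferentiableOn ℂ (fun w => u w / v w) UD := hu.div hv hvne
  have hA : DifferentiableAt ℂ (fun w => u w / v w) z :=
    hdiv.differentiableAt (UD_open.mem_nhds hz)
  refine hA.congr_of_eventuallyEq ?_
  filter_upwards [UD_open.mem_nhds hz] with w hw using heq w hw

lemma memNev_mul_z {g : ℂ → ℂ} (hg : MemNev g) : MemNev (fun z => z * g z) := by
  obtain ⟨u, v, ⟨hu, M, hM⟩, hvH, hvne, heq⟩ := hg
  refine ⟨fun z => z * u z, v, ⟨differentiableOn_id.mul hu, M, ?_⟩, hvH, hvne, ?_⟩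
  · intro z hz
    have h1 : ‖z‖ ≤ 1 := by
      have := Metric.mem_ball.mp hz
      simpa [dist_eq_norm] using this.le
    calc ‖z * u z‖ = ‖z‖ * ‖u z‖ := norm_mul _ _
      _ ≤ 1 * ‖u z‖ := by
          exact mul_le_mul_of_nonneg_right h1 (norm_nonneg _)
      _ ≤ M := by simpa using hM z hz
  · intro z hz
    show z * g z = (z * u z) / v z
    rw [heq z hz, mul_div_assoc]

lemma memNev_sub {a b : ℂ → ℂ} (ha : MemNev a) (hb : MemNev b) :
    MemNev (fun z => a z - b z) := by
  obtain ⟨u1, v1, ⟨hu1, M1, hM1⟩, ⟨hv1, K1, hK1⟩, hv1ne, he1⟩ := ha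
  obtain ⟨u2, v2, ⟨hu2, M2, hM2⟩, ⟨hv2, K2, hK2⟩, hv2ne, he2⟩ := hb
  have h0UD : (0:ℂ) ∈ UD := by simp [UD]
  have hM1n : (0:ℝ) ≤ M1 := le_trans (norm_nonneg _) (hM1 0 h0UD)
  have hM2n : (0:ℝ) ≤ M2 := le_trans (norm_nonneg _) (hM2 0 h0UD)
  have hK1n : (0:ℝ) ≤ K1 := le_trans (norm_nonneg _) (hK1 0 h0UD)
  have hK2n : (0:ℝ) ≤ K2 := le_trans (norm_nonneg _) (hK2 0 h0UD)
  refine ⟨fun z => u1 z * v2 z - u2 z * v1 z, fun z => v1 z * v2 z,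
    ⟨(hu1.mul hv2).sub (hu2.mul hv1), M1 * K2 + M2 * K1, ?_⟩,
    ⟨hv1.mul hv2, K1 * K2, ?_⟩,
    fun z hz => mul_ne_zero (hv1ne z hz) (hv2ne z hz), ?_⟩
  · intro z hz
    have h0 : (0:ℝ) ≤ ‖u1 z‖ := norm_nonneg _
    calc ‖u1 z * v2 z - u2 z * v1 z‖ ≤ ‖u1 z * v2 z‖ + ‖u2 z * v1 z‖ := norm_sub_le _ _
      _ = ‖u1 z‖ * ‖v2 z‖ + ‖u2 z‖ * ‖v1 z‖ := by rw [norm_mul, norm_mul]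
      _ ≤ M1 * K2 + M2 * K1 := by
          gcongr <;> first
            | exact hM1 z hz | exact hK2 z hz | exact hM2 z hz | exact hK1 z hz
            | positivity | assumption
  · intro z hz
    calc ‖v1 z * v2 z‖ = ‖v1 z‖ * ‖v2 z‖ := norm_mul _ _
      _ ≤ K1 * K2 := by
          gcongr <;> first | exact hK1 z hz | exact hK2 z hz | positivity | assumption
  · intro z hz
    show a z - b z = (u1 z * v2 z - u2 z * v1 z) / (v1 z * v2 z)
    rw [he1 z hz, he2 z hz]
    field_simp [hv1ne z hz, hv2ne z hz]

/-- if z·N' ⊆ N' then N ⊆ N'; consequently, given Hayman's example,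
z is not a multiplier of N'. -/
theorem stmt7 :
    ((∀ f : ℂ → ℂ, MemNev f →
        ∃ F : ℂ → ℂ, MemNev F ∧ ∀ z ∈ UD, deriv F z = z * deriv f z) →
      ∀ g : ℂ → ℂ, MemNev g →
        ∃ G : ℂ → ℂ, MemNev G ∧ ∀ z ∈ UD, deriv G z = g z) ∧
    ((∃ f : ℂ → ℂ, MemNev f ∧
        ¬ ∃ F : ℂ → ℂ, MemNev F ∧ ∀ z ∈ UD, deriv F z = f z) →
      ¬ ∀ f : ℂ → ℂ, MemNev f →
        ∃ F : ℂ → ℂ, MemNev F ∧ ∀ z ∈ UD, deriv F z = z * deriv f z) := by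
  have main : (∀ f : ℂ → ℂ, MemNev f →
        ∃ F : ℂ → ℂ, MemNev F ∧ ∀ z ∈ UD, deriv F z = z * deriv f z) →
      ∀ g : ℂ → ℂ, MemNev g →
        ∃ G : ℂ → ℂ, MemNev G ∧ ∀ z ∈ UD, deriv G z = g z := by
    intro H g hg
    obtain ⟨F, hF, hF'⟩ := H g hg
    refine ⟨fun z => z * g z - F z, memNev_sub (memNev_mul_z hg) hF, ?_⟩
    intro z hz
    have hgd : DifferentiableAt ℂ g z := memNev_diffAt hg z hz
    have hFd : DifferentiableAt ℂ F z := memNev_diffAt hF z hz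
    have hmd : DifferentiableAt ℂ (fun w => w * g w) z := differentiableAt_id.mul hgd
    have hder : deriv (fun w => w * g w) z = 1 * g z + z * deriv g z :=
      ((hasDerivAt_id z).mul hgd.hasDerivAt).deriv
    rw [deriv_fun_sub hmd hFd, hder, hF' z hz]
    ring
  exact ⟨main, fun ⟨f, hf, hno⟩ H => hno (main H f hf)⟩
end
end

section
/- If X is a vector space of holomorphic functions on the unit disk containing {f' : f ∈ N} and invariant under multiplication by H^∞, and if every η ∈ BMOA admits a weak factorization η' = φ₁ψ₁' + φ₂ψ₂' with φ_j, ψ_j ∈ H^∞, then N · BMOA' ⊆ X, where BMOA' = {η' : η ∈ BMOA}. -/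
open MeasureTheory Set Filter Finset

noncomputable section

lemma memOn_congr {X : Set (ℂ → ℂ)} {f g : ℂ → ℂ} (hf : MemOn X f)
    (h : ∀ z ∈ UD, f z = g z) : MemOn X g := by
  obtain ⟨F, hF, hFf⟩ := hf
  exact ⟨F, hF, fun z hz => (hFf z hz).trans (h z hz)⟩

lemma memOn_sub {X : Submodule ℂ (ℂ → ℂ)} {f g : ℂ → ℂ}
    (hf : MemOn (X : Set (ℂ → ℂ)) f) (hg : MemOn (X : Set (ℂ → ℂ)) g) :
    MemOn (X : Set (ℂ → ℂ)) (fun z => f z - g z) := by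
  obtain ⟨F, hF, hFf⟩ := hf
  obtain ⟨G, hG, hGg⟩ := hg
  exact ⟨F - G, X.sub_mem hF hG, fun z hz => by
    simp [Pi.sub_apply, hFf z hz, hGg z hz]⟩

lemma memOn_add {X : Submodule ℂ (ℂ → ℂ)} {f g : ℂ → ℂ}
    (hf : MemOn (X : Set (ℂ → ℂ)) f) (hg : MemOn (X : Set (ℂ → ℂ)) g) :
    MemOn (X : Set (ℂ → ℂ)) (fun z => f z + g z) := by
  obtain ⟨F, hF, hFf⟩ := hf
  obtain ⟨G, hG, hGg⟩ := hg
  exact ⟨F + G, X.add_mem hF hG, fun z hz => by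
    simp [Pi.add_apply, hFf z hz, hGg z hz]⟩

lemma nev_diffOn {g : ℂ → ℂ} (hg : MemNev g) : DifferentiableOn ℂ g UD := by
  obtain ⟨u, v, hu, hv, hvz, heq⟩ := hg
  exact (hu.1.div hv.1 hvz).congr fun z hz => heq z hz

lemma hinf_mul {u ψ : ℂ → ℂ} (hu : MemHinf u) (hψ : MemHinf ψ) :
    MemHinf (fun z => u z * ψ z) := by
  obtain ⟨hu1, M, hM⟩ := hu
  obtain ⟨hψ1, N, hN⟩ := hψ
  have h0 : (0:ℂ) ∈ UD := by simp [UD]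
  have hM0 : 0 ≤ M := le_trans (norm_nonneg _) (hM 0 h0)
  refine ⟨hu1.mul hψ1, M * N, fun z hz => ?_⟩
  calc ‖u z * ψ z‖ = ‖u z‖ * ‖ψ z‖ := norm_mul _ _
    _ ≤ M * N := mul_le_mul (hM z hz) (hN z hz) (norm_nonneg _) hM0

lemma nev_mul_hinf {g ψ : ℂ → ℂ} (hg : MemNev g) (hψ : MemHinf ψ) :
    MemNev (fun z => g z * ψ z) := by
  obtain ⟨u, v, hu, hv, hvz, heq⟩ := hg
  refine ⟨fun z => u z * ψ z, v, hinf_mul hu hψ, hv, hvz, fun z hz => ?_⟩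
  show g z * ψ z = u z * ψ z / v z
  rw [heq z hz]; field_simp

lemma key_mul {X : Submodule ℂ (ℂ → ℂ)}
    (hXN' : ∀ f : ℂ → ℂ, MemNev f → MemOn (X : Set (ℂ → ℂ)) (deriv f))
    (hXideal : ∀ (h f : ℂ → ℂ), MemHinf h → MemOn (X : Set (ℂ → ℂ)) f →
      MemOn (X : Set (ℂ → ℂ)) (fun z => h z * f z))
    {g ψ : ℂ → ℂ} (hg : MemNev g) (hψ : MemHinf ψ) :
    MemOn (X : Set (ℂ → ℂ)) (fun z => g z * deriv ψ z) := by
  have hUD : IsOpen UD := Metric.isOpen_ball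
  have h1 : MemOn (X : Set (ℂ → ℂ)) (deriv (fun z => g z * ψ z)) :=
    hXN' _ (nev_mul_hinf hg hψ)
  have h2 : MemOn (X : Set (ℂ → ℂ)) (fun z => ψ z * deriv g z) :=
    hXideal ψ (deriv g) hψ (hXN' g hg)
  refine memOn_congr (memOn_sub h1 h2) fun z hz => ?_
  have hgz : DifferentiableAt ℂ g z := (nev_diffOn hg).differentiableAt (hUD.mem_nhds hz)
  have hψz : DifferentiableAt ℂ ψ z := hψ.1.differentiableAt (hUD.mem_nhds hz)
  rw [deriv_fun_mul hgz hψz]; ring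

/-- given the Aleksandrov–Peller weak factorization of BMOA derivatives,
every H^∞-invariant vector space X of holomorphic functions containing N' contains N·BMOA'. -/
theorem stmt14 (X : Submodule ℂ (ℂ → ℂ)) (hXhol : ∀ f ∈ X, HolOn f)
    (hXideal : ∀ (h f : ℂ → ℂ), MemHinf h → MemOn (X : Set (ℂ → ℂ)) f →
      MemOn (X : Set (ℂ → ℂ)) (fun z => h z * f z))
    (hXN' : ∀ f : ℂ → ℂ, MemNev f → MemOn (X : Set (ℂ → ℂ)) (deriv f))
    (hAP : ∀ η : ℂ → ℂ, MemBMOA η →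
      ∃ φ₁ ψ₁ φ₂ ψ₂ : ℂ → ℂ, MemHinf φ₁ ∧ MemHinf ψ₁ ∧ MemHinf φ₂ ∧ MemHinf ψ₂ ∧
        ∀ z ∈ UD, deriv η z = φ₁ z * deriv ψ₁ z + φ₂ z * deriv ψ₂ z) :
    ∀ g η : ℂ → ℂ, MemNev g → MemBMOA η →
      MemOn (X : Set (ℂ → ℂ)) (fun z => g z * deriv η z) := by
  intro g η hg hη
  obtain ⟨φ₁, ψ₁, φ₂, ψ₂, hφ₁, hψ₁, hφ₂, hψ₂, hfac⟩ := hAP η hη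
  have h1 := hXideal φ₁ _ hφ₁ (key_mul hXN' hXideal hg hψ₁)
  have h2 := hXideal φ₂ _ hφ₂ (key_mul hXN' hXideal hg hψ₂)
  refine memOn_congr (memOn_add h1 h2) fun z hz => ?_
  rw [hfac z hz]; ring
end
end
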